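/- Fix n ≥ 1 and define the real Hamiltonian H : ℂ^n × ℂ^n × ℝ → ℝ by H(a,q,u) = 2 Re[ ∑_{k=1}^{n} (−a − 2∑_{s=1}^{n−1} e^{−isu} A(a)^s a)_k q_k ]. Let I ⊆ ℝ be an interval, let u : I → ℝ be differentiable, and let a, q : I → ℂ^n be differentiable and satisfy the phase system a'(t) = −a(t) − 2∑_{s=1}^{n−1} e^{−isu(t)} A(a(t))^s a(t) and the adjoint system q'(t) = q(t) + 2∑_{s=1}^{n−1} e^{−isu(t)}(s+1)(A(a(t))ᵀ)^s q(t). If ∂H/∂u (a(t), q(t), u(t)) = 0 for all t ∈ I, then the function t ↦ H(a(t), q(t), u(t)) is constant on I. -/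

import Mathlib

open Complex Metric

/-- The lower-triangular nilpotent Toeplitz matrix `A(a)` with `A(a)_{j,k} = a_{j-k}`
(1-indexed) for `j > k` and `0` otherwise. -/
noncomputable def toeplitzA {n : ℕ} (a : Fin n → ℂ) : Matrix (Fin n) (Fin n) ℂ :=
  Matrix.of fun j k =>
    if _ : (k : ℕ) < (j : ℕ) then a ⟨(j : ℕ) - (k : ℕ) - 1, by have := j.isLt; omega⟩ else 0

/-- The real Hamiltonian
`H(a,q,u) = 2 Re[∑_{k=1}^n (-a - 2∑_{s=1}^{n-1} e^{-isu} A(a)^s a)_k q_k]`. -/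
noncomputable def realHam (n : ℕ) (a q : Fin n → ℂ) (u : ℝ) : ℝ :=
  2 * (∑ k : Fin n, (-(a k) - 2 * ∑ s ∈ Finset.Icc 1 (n - 1),
      Complex.exp (-(s : ℂ) * (u : ℂ) * Complex.I) *
        ((toeplitzA a ^ s).mulVec a) k) * q k).re

/-! ### Combinatorial lemmas about `toeplitzA` -/

noncomputable def extv {n : ℕ} (x : Fin n → ℂ) (m : ℕ) : ℂ :=
  if h : m < n then x ⟨m, h⟩ else 0

lemma extv_coe {n : ℕ} (y : Fin n → ℂ) (j : Fin n) : extv y (j:ℕ) = y j := by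
  simp [extv]

lemma toeplitzA_apply' {n : ℕ} (x : Fin n → ℂ) (j k : Fin n) :
    toeplitzA x j k = if (k : ℕ) < (j : ℕ) then extv x ((j:ℕ) - (k:ℕ) - 1) else 0 := by
  simp only [toeplitzA, Matrix.of_apply, extv]
  by_cases h : (k:ℕ) < (j:ℕ)
  · rw [dif_pos h, if_pos h, dif_pos (by have := j.isLt; omega)]
  · rw [dif_neg h, if_neg h]

lemma sum_fin_ite {n : ℕ} (p : ℕ → Prop) [DecidablePred p] (f : ℕ → ℂ) :
    ∑ l : Fin n, (if p (l:ℕ) then f (l:ℕ) else 0) = ∑ m ∈ Finset.range n, if p m then f m else 0 :=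
  Fin.sum_univ_eq_sum_range (fun i => if p i then f i else 0) n

lemma toeplitzA_mulVec_apply {n : ℕ} (x y : Fin n → ℂ) (k : Fin n) :
    (toeplitzA x).mulVec y k = ∑ m ∈ Finset.range n, (if m < (k:ℕ) then extv x ((k:ℕ) - m - 1) * extv y m else 0) := by
  simp only [Matrix.mulVec, dotProduct, toeplitzA_apply']
  rw [← sum_fin_ite (fun m => m < (k:ℕ)) (fun m => extv x ((k:ℕ) - m - 1) * extv y m)]
  refine Finset.sum_congr rfl fun j _ => ?_
  by_cases h : (j:ℕ) < (k:ℕ)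
  · rw [if_pos h, if_pos h, extv_coe]
  · rw [if_neg h, if_neg h, zero_mul]

lemma toeplitzA_mulVec_swap {n : ℕ} (x y : Fin n → ℂ) :
    (toeplitzA x).mulVec y = (toeplitzA y).mulVec x := by
  funext k
  rw [toeplitzA_mulVec_apply, toeplitzA_mulVec_apply]
  refine Finset.sum_nbij' (fun m => if m < (k:ℕ) then (k:ℕ) - m - 1 else m)
    (fun m => if m < (k:ℕ) then (k:ℕ) - m - 1 else m) ?_ ?_ ?_ ?_ ?_ <;> intro m hm
  · simp only [Finset.mem_range] at *
    split_ifs <;> omega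
  · simp only [Finset.mem_range] at *
    split_ifs <;> omega
  · split_ifs <;> omega
  · split_ifs <;> omega
  · by_cases h : m < (k:ℕ)
    · rw [if_pos h, if_pos h, if_pos (by omega : (k:ℕ) - m - 1 < (k:ℕ))]
      have : (k:ℕ) - ((k:ℕ) - m - 1) - 1 = m := by omega
      rw [this, mul_comm]
    · rw [if_neg h, if_neg h, if_neg h]

lemma toeplitzA_commute {n : ℕ} (x y : Fin n → ℂ) :
    Commute (toeplitzA x) (toeplitzA y) := by
  ext j k
  simp only [Matrix.mul_apply, toeplitzA_apply']
  have key : ∀ (u v : Fin n → ℂ),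
      ∑ l : Fin n, (if (l:ℕ) < (j:ℕ) then extv u ((j:ℕ)-(l:ℕ)-1) else 0) * (if (k:ℕ) < (l:ℕ) then extv v ((l:ℕ)-(k:ℕ)-1) else 0)
      = ∑ m ∈ Finset.range n, (if m < (j:ℕ) ∧ (k:ℕ) < m then extv u ((j:ℕ)-m-1) * extv v (m-(k:ℕ)-1) else 0) := by
    intro u v
    rw [← sum_fin_ite (fun m => m < (j:ℕ) ∧ (k:ℕ) < m) (fun m => extv u ((j:ℕ)-m-1) * extv v (m-(k:ℕ)-1))]
    refine Finset.sum_congr rfl fun l _ => ?_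
    split_ifs <;> simp_all
  rw [key, key]
  refine Finset.sum_nbij' (fun m => if m < (j:ℕ) ∧ (k:ℕ) < m then (j:ℕ)+(k:ℕ)-m else m)
    (fun m => if m < (j:ℕ) ∧ (k:ℕ) < m then (j:ℕ)+(k:ℕ)-m else m) ?_ ?_ ?_ ?_ ?_ <;> intro m hm
  · simp only [Finset.mem_range] at *
    have := j.isLt
    split_ifs <;> omega
  · simp only [Finset.mem_range] at *
    have := j.isLt
    split_ifs <;> omega
  · split_ifs <;> omega
  · split_ifs <;> omega
  · by_cases h : m < (j:ℕ) ∧ (k:ℕ) < m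
    · rw [if_pos h, if_pos h, if_pos (by omega : (j:ℕ)+(k:ℕ)-m < (j:ℕ) ∧ (k:ℕ) < (j:ℕ)+(k:ℕ)-m)]
      have e1 : (j:ℕ) - ((j:ℕ)+(k:ℕ)-m) - 1 = m-(k:ℕ)-1 := by omega
      have e2 : (j:ℕ)+(k:ℕ)-m-(k:ℕ)-1 = (j:ℕ)-m-1 := by omega
      rw [e1, e2, mul_comm]
    · rw [if_neg h, if_neg h, if_neg h]

/-! ### Sum-manipulation helpers -/

lemma pair_mulVec {n : ℕ} (M : Matrix (Fin n) (Fin n) ℂ) (x y : Fin n → ℂ) :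
    ∑ k, M.mulVec x k * y k = ∑ k, x k * M.transpose.mulVec y k := by
  simp only [Matrix.mulVec, dotProduct, Matrix.transpose_apply, Finset.sum_mul,
    Finset.mul_sum]
  rw [Finset.sum_comm]
  exact Finset.sum_congr rfl fun j _ => Finset.sum_congr rfl fun k _ => by ring

lemma sum_swap_helper {n : ℕ} (S : Finset ℕ) (c : ℂ) (w : ℕ → ℂ) (f : ℕ → Fin n → ℂ) (g : Fin n → ℂ) :
    ∑ k : Fin n, (c * ∑ r ∈ S, w r * f r k) * g k = c * ∑ r ∈ S, w r * ∑ k : Fin n, f r k * g k := by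
  simp only [Finset.sum_mul, Finset.mul_sum]
  rw [Finset.sum_comm]
  exact Finset.sum_congr rfl fun r _ => Finset.sum_congr rfl fun k _ => by ring

lemma mul_sum_helper (c x : ℂ) (S : Finset ℕ) (f : ℕ → ℂ) :
    x * (c * ∑ r ∈ S, f r) = c * ∑ r ∈ S, x * f r := by
  simp only [Finset.mul_sum]
  exact Finset.sum_congr rfl fun r _ => by ring

/-! ### Derivative machinery -/

lemma hasDeriv_extv {n : ℕ} {I : Set ℝ} {t : ℝ} {a : ℝ → Fin n → ℂ} {aD : Fin n → ℂ}
    (ha : ∀ k, HasDerivWithinAt (fun τ => a τ k) (aD k) I t) (m : ℕ) :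
    HasDerivWithinAt (fun τ => extv (a τ) m) (extv aD m) I t := by
  by_cases h : m < n
  · simpa only [extv, dif_pos h] using ha ⟨m, h⟩
  · simpa only [extv, dif_neg h] using hasDerivWithinAt_const t I (0 : ℂ)

lemma hasDeriv_toeplitz_entry {n : ℕ} {I : Set ℝ} {t : ℝ} {a : ℝ → Fin n → ℂ} {aD : Fin n → ℂ}
    (ha : ∀ k, HasDerivWithinAt (fun τ => a τ k) (aD k) I t) (k j : Fin n) :
    HasDerivWithinAt (fun τ => toeplitzA (a τ) k j) (toeplitzA aD k j) I t := by
  simp only [toeplitzA_apply']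
  by_cases h : (j:ℕ) < (k:ℕ)
  · simp only [if_pos h]; exact hasDeriv_extv ha _
  · simp only [if_neg h]; exact hasDerivWithinAt_const t I (0 : ℂ)

lemma hasDeriv_P {n : ℕ} {I : Set ℝ} {t : ℝ} {a : ℝ → Fin n → ℂ} {aD : Fin n → ℂ}
    (ha : ∀ k, HasDerivWithinAt (fun τ => a τ k) (aD k) I t) (m : ℕ) (k : Fin n) :
    HasDerivWithinAt (fun τ => ((toeplitzA (a τ)) ^ m).mulVec (a τ) k)
      (((m:ℂ)+1) * ((toeplitzA (a t) ^ m).mulVec aD) k) I t := by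
  induction m generalizing k with
  | zero =>
    simp only [pow_zero, Matrix.one_mulVec, Nat.cast_zero, zero_add, one_mul]
    exact ha k
  | succ m ih =>
    have hfun : ∀ τ, ((toeplitzA (a τ)) ^ (m+1)).mulVec (a τ) k
        = ∑ j, toeplitzA (a τ) k j * ((toeplitzA (a τ)) ^ m).mulVec (a τ) j := by
      intro τ
      rw [pow_succ', ← Matrix.mulVec_mulVec]
      rfl
    have hder : HasDerivWithinAt
        (fun τ => ∑ j, toeplitzA (a τ) k j * ((toeplitzA (a τ)) ^ m).mulVec (a τ) j)
        (∑ j, (toeplitzA aD k j * ((toeplitzA (a t)) ^ m).mulVec (a t) j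
          + toeplitzA (a t) k j * (((m:ℂ)+1) * ((toeplitzA (a t) ^ m).mulVec aD) j))) I t := by
      refine HasDerivWithinAt.fun_sum fun j _ => ?_
      exact (hasDeriv_toeplitz_entry ha k j).mul (ih j)
    rw [funext hfun] at *
    convert hder using 1
    have key : (toeplitzA aD).mulVec ((toeplitzA (a t) ^ m).mulVec (a t))
        = (toeplitzA (a t) ^ (m+1)).mulVec aD := by
      rw [Matrix.mulVec_mulVec, ((toeplitzA_commute aD (a t)).pow_right m).eq, ← Matrix.mulVec_mulVec,
        toeplitzA_mulVec_swap, Matrix.mulVec_mulVec, ← pow_succ]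
    have expand : (∑ j, (toeplitzA aD k j * ((toeplitzA (a t)) ^ m).mulVec (a t) j
          + toeplitzA (a t) k j * (((m:ℂ)+1) * ((toeplitzA (a t) ^ m).mulVec aD) j)))
        = ((toeplitzA aD).mulVec ((toeplitzA (a t) ^ m).mulVec (a t))) k
          + ((m:ℂ)+1) * ((toeplitzA (a t) ^ (m+1)).mulVec aD) k := by
      rw [pow_succ', ← Matrix.mulVec_mulVec, Finset.sum_add_distrib]
      congr 1
      simp only [Matrix.mulVec, dotProduct, Finset.mul_sum]
      exact Finset.sum_congr rfl fun j _ => Finset.sum_congr rfl fun x _ => by ring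
    rw [expand, key]
    push_cast
    ring

/-! ### Abbreviations -/

noncomputable def Pv {n : ℕ} (a : ℝ → Fin n → ℂ) (m : ℕ) (τ : ℝ) : Fin n → ℂ :=
  ((toeplitzA (a τ)) ^ m).mulVec (a τ)

noncomputable def Gv {n : ℕ} (a q : ℝ → Fin n → ℂ) (m : ℕ) (τ : ℝ) : ℂ :=
  ∑ k, Pv a m τ k * q τ k

noncomputable def wv (u : ℝ → ℝ) (s : ℕ) (τ : ℝ) : ℂ :=
  Complex.exp (-(s : ℂ) * (u τ : ℂ) * Complex.I)

noncomputable def aDv {n : ℕ} (a : ℝ → Fin n → ℂ) (u : ℝ → ℝ) (t : ℝ) : Fin n → ℂ :=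
  fun k => -(a t k) - 2 * ∑ s ∈ Finset.Icc 1 (n-1), wv u s t * Pv a s t k

noncomputable def qDv {n : ℕ} (a q : ℝ → Fin n → ℂ) (u : ℝ → ℝ) (t : ℝ) : Fin n → ℂ :=
  fun k => q t k + 2 * ∑ s ∈ Finset.Icc 1 (n-1),
    wv u s t * ((s:ℂ)+1) * (((toeplitzA (a t)).transpose ^ s).mulVec (q t)) k

lemma Hre {n : ℕ} (a q : ℝ → Fin n → ℂ) (u : ℝ → ℝ) (τ : ℝ) :
    realHam n (a τ) (q τ) (u τ)
      = 2 * (-(Gv a q 0 τ) - 2 * ∑ s ∈ Finset.Icc 1 (n-1), wv u s τ * Gv a q s τ).re := by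
  unfold realHam
  congr 2
  calc ∑ k, (-(a τ k) - 2 * ∑ s ∈ Finset.Icc 1 (n-1),
          Complex.exp (-(s:ℂ) * ((u τ : ℝ):ℂ) * Complex.I) * ((toeplitzA (a τ) ^ s).mulVec (a τ)) k) * q τ k
      = (∑ k, -(a τ k * q τ k)) - ∑ k, (2 * ∑ s ∈ Finset.Icc 1 (n-1),
          Complex.exp (-(s:ℂ) * ((u τ : ℝ):ℂ) * Complex.I) * ((toeplitzA (a τ) ^ s).mulVec (a τ)) k) * q τ k := by
        rw [← Finset.sum_sub_distrib]
        exact Finset.sum_congr rfl fun k _ => by ring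
    _ = -(Gv a q 0 τ) - 2 * ∑ s ∈ Finset.Icc 1 (n-1), wv u s τ * Gv a q s τ := by
        rw [sum_swap_helper (Finset.Icc 1 (n-1)) 2
          (fun s => Complex.exp (-(s:ℂ) * ((u τ : ℝ):ℂ) * Complex.I))
          (fun s k => ((toeplitzA (a τ) ^ s).mulVec (a τ)) k) (q τ), Finset.sum_neg_distrib]
        congr 1
        unfold Gv Pv
        rw [pow_zero, Matrix.one_mulVec]

lemma key_deriv {n : ℕ} {I : Set ℝ} {u : ℝ → ℝ} {a q : ℝ → Fin n → ℂ}
    (hu : ∀ t ∈ I, DifferentiableWithinAt ℝ u I t)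
    (ha : ∀ t ∈ I, ∀ k : Fin n,
      HasDerivWithinAt (fun s => a s k)
        (-(a t k) - 2 * ∑ s ∈ Finset.Icc 1 (n - 1),
          Complex.exp (-(s : ℂ) * (u t : ℂ) * Complex.I) *
            ((toeplitzA (a t) ^ s).mulVec (a t)) k) I t)
    (hq : ∀ t ∈ I, ∀ k : Fin n,
      HasDerivWithinAt (fun s => q s k)
        (q t k + 2 * ∑ s ∈ Finset.Icc 1 (n - 1),
          Complex.exp (-(s : ℂ) * (u t : ℂ) * Complex.I) * ((s : ℂ) + 1) *
            (((toeplitzA (a t)).transpose ^ s).mulVec (q t)) k) I t)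
    (hcrit : ∀ t ∈ I, deriv (fun v => realHam n (a t) (q t) v) (u t) = 0)
    {t : ℝ} (ht : t ∈ I) :
    HasDerivWithinAt (fun τ => realHam n (a τ) (q τ) (u τ)) 0 I t := by
  classical
  set u' : ℝ := derivWithin u I t with hu'def
  have hu' : HasDerivWithinAt u u' I t := (hu t ht).hasDerivWithinAt
  have huC : HasDerivWithinAt (fun τ => ((u τ : ℝ) : ℂ)) ((u' : ℝ) : ℂ) I t :=
    Complex.ofRealCLM.hasFDerivAt.comp_hasDerivWithinAt t hu'
  have haD : ∀ k, HasDerivWithinAt (fun τ => a τ k) (aDv a u t k) I t := fun k => ha t ht k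
  have hqD : ∀ k, HasDerivWithinAt (fun τ => q τ k) (qDv a q u t k) I t := fun k => hq t ht k
  have hP : ∀ (m : ℕ) (k : Fin n), HasDerivWithinAt (fun τ => Pv a m τ k)
      (((m:ℂ)+1) * ((toeplitzA (a t) ^ m).mulVec (aDv a u t)) k) I t :=
    fun m k => hasDeriv_P haD m k
  -- value of the derivative of the pairing G m
  have hVal : ∀ m : ℕ,
      (∑ k, (((m:ℂ)+1) * ((toeplitzA (a t) ^ m).mulVec (aDv a u t)) k * q t k + Pv a m t k * qDv a q u t k))
      = -(m:ℂ) * Gv a q m t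
        + 2 * ∑ r ∈ Finset.Icc 1 (n-1), wv u r t * (((r:ℂ)-(m:ℂ)) * Gv a q (m+r) t) := by
    intro m
    have hMP : ∀ r, (toeplitzA (a t) ^ m).mulVec (Pv a r t) = Pv a (m+r) t := by
      intro r
      show (toeplitzA (a t) ^ m).mulVec ((toeplitzA (a t) ^ r).mulVec (a t)) = _
      rw [Matrix.mulVec_mulVec, ← pow_add]
      rfl
    have hA : ∀ k, ((toeplitzA (a t) ^ m).mulVec (aDv a u t)) k
        = -(Pv a m t k) - 2 * ∑ r ∈ Finset.Icc 1 (n-1), wv u r t * Pv a (m+r) t k := by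
      intro k
      have expand : ((toeplitzA (a t) ^ m).mulVec (aDv a u t)) k
          = ∑ j, (toeplitzA (a t) ^ m) k j * (-(a t j) - 2 * ∑ r ∈ Finset.Icc 1 (n-1), wv u r t * Pv a r t j) := rfl
      rw [expand]
      have step1 : ∀ j : Fin n, (toeplitzA (a t) ^ m) k j * (-(a t j) - 2 * ∑ r ∈ Finset.Icc 1 (n-1), wv u r t * Pv a r t j)
          = -((toeplitzA (a t) ^ m) k j * a t j) - ∑ r ∈ Finset.Icc 1 (n-1), wv u r t * (2 * ((toeplitzA (a t) ^ m) k j * Pv a r t j)) := by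
        intro j
        rw [mul_sub, mul_neg]
        congr 1
        rw [Finset.mul_sum, Finset.mul_sum]
        exact Finset.sum_congr rfl fun r _ => by ring
      rw [Finset.sum_congr rfl fun j _ => step1 j, Finset.sum_sub_distrib]
      congr 1
      · simp only [Finset.sum_neg_distrib]
        rfl
      · rw [Finset.sum_comm, Finset.mul_sum]
        refine Finset.sum_congr rfl fun r _ => ?_
        have hp : Pv a (m+r) t k = ∑ j, (toeplitzA (a t) ^ m) k j * Pv a r t j := by
          rw [← hMP r]; rfl
        rw [hp, Finset.mul_sum, Finset.mul_sum]
        exact Finset.sum_congr rfl fun j _ => by ring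
    have hFirst : ∑ k, ((m:ℂ)+1) * ((toeplitzA (a t) ^ m).mulVec (aDv a u t)) k * q t k
        = ((m:ℂ)+1) * (-(Gv a q m t) - 2 * ∑ r ∈ Finset.Icc 1 (n-1), wv u r t * Gv a q (m+r) t) := by
      simp only [hA]
      rw [show (∑ k, ((m:ℂ)+1) * (-(Pv a m t k) - 2 * ∑ r ∈ Finset.Icc 1 (n-1), wv u r t * Pv a (m+r) t k) * q t k)
          = ((m:ℂ)+1) * ∑ k, (-(Pv a m t k) - 2 * ∑ r ∈ Finset.Icc 1 (n-1), wv u r t * Pv a (m+r) t k) * q t k from by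
        rw [Finset.mul_sum]; exact Finset.sum_congr rfl fun k _ => by ring]
      congr 1
      rw [show (∑ k, (-(Pv a m t k) - 2 * ∑ r ∈ Finset.Icc 1 (n-1), wv u r t * Pv a (m+r) t k) * q t k)
          = (∑ k, -(Pv a m t k * q t k)) - ∑ k, (2 * ∑ r ∈ Finset.Icc 1 (n-1), wv u r t * Pv a (m+r) t k) * q t k from by
        rw [← Finset.sum_sub_distrib]; exact Finset.sum_congr rfl fun k _ => by ring]
      rw [sum_swap_helper (Finset.Icc 1 (n-1)) 2 (fun r => wv u r t) (fun r k => Pv a (m+r) t k) (q t),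
        Finset.sum_neg_distrib]
      rfl
    have hSecond : ∑ k, Pv a m t k * qDv a q u t k
        = Gv a q m t + 2 * ∑ r ∈ Finset.Icc 1 (n-1), wv u r t * (((r:ℂ)+1) * Gv a q (m+r) t) := by
      have hpair : ∀ r, ∑ k, Pv a m t k * (((toeplitzA (a t)).transpose ^ r).mulVec (q t)) k
          = Gv a q (m+r) t := by
        intro r
        rw [← Matrix.transpose_pow, ← pair_mulVec]
        have hq2 : (toeplitzA (a t) ^ r).mulVec (Pv a m t) = Pv a (m+r) t := by
          show (toeplitzA (a t) ^ r).mulVec ((toeplitzA (a t) ^ m).mulVec (a t)) = _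
          rw [Matrix.mulVec_mulVec, ← pow_add, Nat.add_comm r m]
          rfl
        rw [hq2]
        rfl
      rw [show (∑ k, Pv a m t k * qDv a q u t k)
          = (∑ k, Pv a m t k * q t k)
            + ∑ k, (2 * ∑ r ∈ Finset.Icc 1 (n-1), (wv u r t * ((r:ℂ)+1)) * (((toeplitzA (a t)).transpose ^ r).mulVec (q t)) k) * Pv a m t k from by
        rw [← Finset.sum_add_distrib]
        refine Finset.sum_congr rfl fun k _ => ?_
        show Pv a m t k * (q t k + 2 * ∑ r ∈ Finset.Icc 1 (n-1),
            wv u r t * ((r:ℂ)+1) * (((toeplitzA (a t)).transpose ^ r).mulVec (q t)) k) = _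
        ring]
      rw [sum_swap_helper (Finset.Icc 1 (n-1)) 2 (fun r => wv u r t * ((r:ℂ)+1))
        (fun r k => (((toeplitzA (a t)).transpose ^ r).mulVec (q t)) k) (Pv a m t)]
      congr 1
      rw [Finset.mul_sum, Finset.mul_sum]
      refine Finset.sum_congr rfl fun r _ => ?_
      rw [show (∑ k, (((toeplitzA (a t)).transpose ^ r).mulVec (q t)) k * Pv a m t k)
          = ∑ k, Pv a m t k * (((toeplitzA (a t)).transpose ^ r).mulVec (q t)) k from
        Finset.sum_congr rfl fun k _ => mul_comm _ _]
      rw [hpair r]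
      ring
    rw [Finset.sum_add_distrib, hFirst, hSecond]
    have hSig : ∑ r ∈ Finset.Icc 1 (n-1), wv u r t * (((r:ℂ)-(m:ℂ)) * Gv a q (m+r) t)
        = (∑ r ∈ Finset.Icc 1 (n-1), wv u r t * (((r:ℂ)+1) * Gv a q (m+r) t))
          - ((m:ℂ)+1) * ∑ r ∈ Finset.Icc 1 (n-1), wv u r t * Gv a q (m+r) t := by
      rw [Finset.mul_sum, ← Finset.sum_sub_distrib]
      exact Finset.sum_congr rfl fun r _ => by ring
    rw [hSig]
    ring
  have hG : ∀ m : ℕ, HasDerivWithinAt (fun τ => Gv a q m τ)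
      (-(m:ℂ) * Gv a q m t + 2 * ∑ r ∈ Finset.Icc 1 (n-1), wv u r t * (((r:ℂ)-(m:ℂ)) * Gv a q (m+r) t)) I t := by
    intro m
    rw [← hVal m]
    exact HasDerivWithinAt.fun_sum fun k _ => (hP m k).mul (hqD k)
  have hw : ∀ s : ℕ, HasDerivWithinAt (fun τ => wv u s τ)
      (-(s:ℂ) * Complex.I * ((u':ℝ):ℂ) * wv u s t) I t := by
    intro s
    have h1 : HasDerivWithinAt (fun τ => -(s:ℂ) * ((u τ : ℝ):ℂ) * Complex.I)
        (-(s:ℂ) * ((u' : ℝ):ℂ) * Complex.I) I t := (huC.const_mul (-(s:ℂ))).mul_const Complex.I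
    have h2 := h1.cexp
    have h3 : -(s:ℂ) * Complex.I * ((u':ℝ):ℂ) * wv u s t
        = Complex.exp (-(s:ℂ) * ((u t : ℝ):ℂ) * Complex.I) * (-(s:ℂ) * ((u' : ℝ):ℂ) * Complex.I) := by
      unfold wv; ring
    rw [h3]
    exact h2
  have hHc := ((hG 0).neg.sub ((HasDerivWithinAt.fun_sum
      (fun s (_ : s ∈ Finset.Icc 1 (n-1)) => (hw s).mul (hG s))).const_mul (2:ℂ)))
  have hT : (∑ x ∈ Finset.Icc 1 (n-1), ∑ r ∈ Finset.Icc 1 (n-1),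
      wv u x t * (wv u r t * (((r:ℂ)-(x:ℂ)) * Gv a q (x+r) t))) = 0 := by
    have h2 : (∑ x ∈ Finset.Icc 1 (n-1), ∑ r ∈ Finset.Icc 1 (n-1),
        wv u x t * (wv u r t * (((r:ℂ)-(x:ℂ)) * Gv a q (x+r) t)))
      + (∑ x ∈ Finset.Icc 1 (n-1), ∑ r ∈ Finset.Icc 1 (n-1),
        wv u x t * (wv u r t * (((r:ℂ)-(x:ℂ)) * Gv a q (x+r) t))) = 0 := by
      nth_rewrite 2 [Finset.sum_comm]
      rw [← Finset.sum_add_distrib]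
      refine Finset.sum_eq_zero fun x hx => ?_
      rw [← Finset.sum_add_distrib]
      refine Finset.sum_eq_zero fun r hr => ?_
      rw [Nat.add_comm r x]
      ring
    linear_combination h2 / 2
  have hHc2 : HasDerivWithinAt
      (fun τ => -(Gv a q 0 τ) - 2 * ∑ s ∈ Finset.Icc 1 (n-1), wv u s τ * Gv a q s τ)
      (2 * Complex.I * ((u':ℝ):ℂ) * ∑ s ∈ Finset.Icc 1 (n-1), (s:ℂ) * wv u s t * Gv a q s t) I t := by
    refine hHc.congr_deriv ?_
    have e1 : ∑ r ∈ Finset.Icc 1 (n-1), wv u r t * (((r:ℂ) - ((0:ℕ):ℂ)) * Gv a q (0+r) t)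
        = ∑ s ∈ Finset.Icc 1 (n-1), (s:ℂ) * wv u s t * Gv a q s t := by
      refine Finset.sum_congr rfl fun r _ => ?_
      rw [Nat.zero_add]
      push_cast
      ring
    have e2 : (-(Complex.I) * ((u':ℝ):ℂ)) * (∑ s ∈ Finset.Icc 1 (n-1), (s:ℂ) * wv u s t * Gv a q s t)
          - (∑ s ∈ Finset.Icc 1 (n-1), (s:ℂ) * wv u s t * Gv a q s t)
          + 2 * ∑ x ∈ Finset.Icc 1 (n-1), ∑ r ∈ Finset.Icc 1 (n-1),
              wv u x t * (wv u r t * (((r:ℂ)-(x:ℂ)) * Gv a q (x+r) t))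
        = ∑ s ∈ Finset.Icc 1 (n-1),
          ((-(s:ℂ) * Complex.I * ((u':ℝ):ℂ) * wv u s t) * Gv a q s t
            + wv u s t * (-(s:ℂ) * Gv a q s t + 2 * ∑ r ∈ Finset.Icc 1 (n-1), wv u r t * (((r:ℂ)-(s:ℂ)) * Gv a q (s+r) t))) := by
      rw [Finset.mul_sum, Finset.mul_sum, ← Finset.sum_sub_distrib, ← Finset.sum_add_distrib]
      refine Finset.sum_congr rfl fun s _ => ?_
      rw [mul_add, mul_sum_helper]
      ring
    rw [e1, ← e2, hT]
    simp only [Nat.cast_zero]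
    ring
  -- criticality: the imaginary part of the weighted sum vanishes
  have hED : ∀ s : ℕ, HasDerivAt (fun v : ℝ => Complex.exp (-(s:ℂ) * (v:ℂ) * Complex.I))
      (Complex.exp (-(s:ℂ) * ((u t : ℝ):ℂ) * Complex.I) * (-(s:ℂ) * ((1:ℝ):ℂ) * Complex.I)) (u t) := by
    intro s
    exact (((hasDerivAt_id (u t)).ofReal_comp.const_mul (-(s:ℂ))).mul_const Complex.I).cexp
  have hsum : HasDerivAt (fun v : ℝ => ∑ k, (-(a t k) - 2 * ∑ s ∈ Finset.Icc 1 (n-1),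
        Complex.exp (-(s:ℂ) * (v:ℂ) * Complex.I) * ((toeplitzA (a t) ^ s).mulVec (a t)) k) * q t k)
      (∑ k, -(2 * ∑ s ∈ Finset.Icc 1 (n-1),
        (Complex.exp (-(s:ℂ) * ((u t : ℝ):ℂ) * Complex.I) * (-(s:ℂ) * ((1:ℝ):ℂ) * Complex.I))
          * ((toeplitzA (a t) ^ s).mulVec (a t)) k) * q t k) (u t) := by
    refine HasDerivAt.fun_sum fun k _ => ?_
    exact (((HasDerivAt.fun_sum fun s _ => (hED s).mul_const (((toeplitzA (a t) ^ s).mulVec (a t)) k)).const_mul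
      (2:ℂ)).const_sub (-(a t k))).mul_const (q t k)
  have hHD : HasDerivAt (fun v => realHam n (a t) (q t) v)
      (2 * (∑ k, -(2 * ∑ s ∈ Finset.Icc 1 (n-1),
        (Complex.exp (-(s:ℂ) * ((u t : ℝ):ℂ) * Complex.I) * (-(s:ℂ) * ((1:ℝ):ℂ) * Complex.I))
          * ((toeplitzA (a t) ^ s).mulVec (a t)) k) * q t k).re) (u t) :=
    (Complex.reCLM.hasFDerivAt.comp_hasDerivAt (u t) hsum).const_mul (2:ℝ)
  have hDval := hHD.deriv
  rw [hcrit t ht] at hDval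
  have hinner : (∑ k, -(2 * ∑ s ∈ Finset.Icc 1 (n-1),
        (Complex.exp (-(s:ℂ) * ((u t : ℝ):ℂ) * Complex.I) * (-(s:ℂ) * ((1:ℝ):ℂ) * Complex.I))
          * ((toeplitzA (a t) ^ s).mulVec (a t)) k) * q t k)
      = 2 * Complex.I * ∑ s ∈ Finset.Icc 1 (n-1), (s:ℂ) * wv u s t * Gv a q s t := by
    rw [show (∑ k, -(2 * ∑ s ∈ Finset.Icc 1 (n-1),
        (Complex.exp (-(s:ℂ) * ((u t:ℝ):ℂ) * Complex.I) * (-(s:ℂ) * ((1:ℝ):ℂ) * Complex.I))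
          * ((toeplitzA (a t) ^ s).mulVec (a t)) k) * q t k)
      = ∑ k, ((-2 : ℂ) * ∑ s ∈ Finset.Icc 1 (n-1),
        (Complex.exp (-(s:ℂ) * ((u t:ℝ):ℂ) * Complex.I) * (-(s:ℂ) * ((1:ℝ):ℂ) * Complex.I))
          * ((toeplitzA (a t) ^ s).mulVec (a t)) k) * q t k from
      Finset.sum_congr rfl fun k _ => by ring]
    rw [sum_swap_helper (Finset.Icc 1 (n-1)) (-2)
      (fun s => Complex.exp (-(s:ℂ) * ((u t:ℝ):ℂ) * Complex.I) * (-(s:ℂ) * ((1:ℝ):ℂ) * Complex.I))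
      (fun s k => ((toeplitzA (a t) ^ s).mulVec (a t)) k) (q t)]
    rw [Finset.mul_sum, Finset.mul_sum]
    refine Finset.sum_congr rfl fun s _ => ?_
    unfold wv Gv Pv
    push_cast
    ring
  rw [hinner] at hDval
  have hStim : (∑ s ∈ Finset.Icc 1 (n-1), (s:ℂ) * wv u s t * Gv a q s t).im = 0 := by
    simp [Complex.mul_re, Complex.mul_im] at hDval ⊢
    linarith
  -- assemble
  have hfun : (fun τ => realHam n (a τ) (q τ) (u τ))
      = fun τ => 2 * (-(Gv a q 0 τ) - 2 * ∑ s ∈ Finset.Icc 1 (n-1), wv u s τ * Gv a q s τ).re :=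
    funext fun τ => Hre a q u τ
  rw [hfun]
  have hre : HasDerivWithinAt
      (fun τ => (-(Gv a q 0 τ) - 2 * ∑ s ∈ Finset.Icc 1 (n-1), wv u s τ * Gv a q s τ).re)
      ((2 * Complex.I * ((u':ℝ):ℂ) * ∑ s ∈ Finset.Icc 1 (n-1), (s:ℂ) * wv u s t * Gv a q s t).re) I t :=
    Complex.reCLM.hasFDerivAt.comp_hasDerivWithinAt t hHc2
  have hfinal := hre.const_mul (2:ℝ)
  refine hfinal.congr_deriv ?_
  have hre0 : (2 * Complex.I * ((u':ℝ):ℂ) * ∑ s ∈ Finset.Icc 1 (n-1), (s:ℂ) * wv u s t * Gv a q s t).re = 0 := by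
    simp [Complex.mul_re, Complex.mul_im, hStim]
  rw [hre0]
  ring

/-- along a trajectory of the phase/adjoint system on which the criticality
condition `∂H/∂u = 0` holds, the Hamiltonian `H(a(t), q(t), u(t))` is constant. -/
theorem hamiltonian_constant_along_critical_trajectory
    (n : ℕ) (hn : 1 ≤ n) (I : Set ℝ) (hI : Convex ℝ I)
    (u : ℝ → ℝ) (hu : ∀ t ∈ I, DifferentiableWithinAt ℝ u I t)
    (a q : ℝ → Fin n → ℂ)
    (ha : ∀ t ∈ I, ∀ k : Fin n,
      HasDerivWithinAt (fun s => a s k)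
        (-(a t k) - 2 * ∑ s ∈ Finset.Icc 1 (n - 1),
          Complex.exp (-(s : ℂ) * (u t : ℂ) * Complex.I) *
            ((toeplitzA (a t) ^ s).mulVec (a t)) k) I t)
    (hq : ∀ t ∈ I, ∀ k : Fin n,
      HasDerivWithinAt (fun s => q s k)
        (q t k + 2 * ∑ s ∈ Finset.Icc 1 (n - 1),
          Complex.exp (-(s : ℂ) * (u t : ℂ) * Complex.I) * ((s : ℂ) + 1) *
            (((toeplitzA (a t)).transpose ^ s).mulVec (q t)) k) I t)
    (hcrit : ∀ t ∈ I, deriv (fun v => realHam n (a t) (q t) v) (u t) = 0) :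
    ∀ t ∈ I, ∀ t' ∈ I, realHam n (a t) (q t) (u t) = realHam n (a t') (q t') (u t') := by
  intro t ht t' ht'
  have key : ∀ x ∈ I, HasDerivWithinAt (fun τ => realHam n (a τ) (q τ) (u τ)) ((fun _ : ℝ => (0:ℝ)) x) I x :=
    fun x hx => key_deriv hu ha hq hcrit hx
  have hb := Convex.norm_image_sub_le_of_norm_hasDerivWithin_le (C := 0) key (fun x _ => by simp) hI ht ht'
  rw [zero_mul] at hb
  have h0 : realHam n (a t') (q t') (u t') - realHam n (a t) (q t) (u t) = 0 :=
    norm_le_zero_iff.mp hb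
  linarith
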